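/- Let (X,G) be a symmetric G-metric space, h: [0,∞)³ → [0,∞) upper semicontinuous and nondecreasing in each variable with h(t,t,t) < t for all t > 0, and T: X → X injective, orbitally continuous, with X T-orbitally complete, satisfying G(Tx,Ty,Tz) ≤ h( G(x,y,z), [G(x,y,z)·G(Tx,Ty,Tz)]^{-1}·G(x,Tx,Tx)·G(y,Ty,Ty)·G(z,Tz,Tz), a(x,y,z)·G(Tx,y,z)·G(x,Ty,z)·G(x,y,Tz) ) for all x ≠ y, where a: X³ → [0,∞) satisfies a(x,y,y)=0 for all x,y. Then for each x ∈ X the orbit (T^n x) G-converges to some u_x with T u_x = u_x. -/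

import Mathlib

open Filter Topology Function

structure GMetricSpace (X : Type*) where
  G : X → X → X → ℝ
  nonneg : ∀ x y z, 0 ≤ G x y z
  eq_zero_iff : ∀ x y z, G x y z = 0 ↔ x = y ∧ y = z
  le_of_ne : ∀ x y z, z ≠ y → G x x y ≤ G x y z
  symm_swap : ∀ x y z, G x y z = G x z y
  symm_cycle : ∀ x y z, G x y z = G y z x
  rect : ∀ x y z a, G x y z ≤ G x a a + G a y z

/-- `(x_n)` G-converges to `x`. -/
def GConv {X : Type*} (g : GMetricSpace X) (s : ℕ → X) (x : X) : Prop :=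
  Tendsto (fun n => g.G x (s n) (s n)) atTop (𝓝 0)

/-- `(x_n)` is a G-Cauchy sequence. -/
def GCauchy {X : Type*} (g : GMetricSpace X) (s : ℕ → X) : Prop :=
  ∀ ε > 0, ∃ N, ∀ m ≥ N, ∀ n ≥ N, g.G (s n) (s m) (s m) < ε

/-- `(X,G)` is a symmetric G-metric space. -/
def GSymmetric {X : Type*} (g : GMetricSpace X) : Prop :=
  ∀ x y, g.G x y y = g.G x x y

/-- `T` is orbitally continuous. -/
def OrbContinuous {X : Type*} (g : GMetricSpace X) (T : X → X) : Prop :=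
  ∀ (x xs : X) (φ : ℕ → ℕ), StrictMono φ →
    GConv g (fun i => T^[φ i] x) xs → GConv g (fun i => T (T^[φ i] x)) (T xs)

/-- `X` is `T`-orbitally complete. -/
def TOrbComplete {X : Type*} (g : GMetricSpace X) (T : X → X) : Prop :=
  ∀ (a : X) (s : ℕ → X), (∀ i, ∃ k, s i = T^[k] a) → GCauchy g s → ∃ u, GConv g s u

lemma d_symm {X : Type*} (g : GMetricSpace X) (hsym : GSymmetric g) (x y : X) :
    g.G x y y = g.G y x x := by
  rw [hsym x y, g.symm_swap x x y, g.symm_cycle x y x]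

lemma d_tri {X : Type*} (g : GMetricSpace X) (x y z : X) :
    g.G x z z ≤ g.G x y y + g.G y z z := g.rect x z z y

lemma d_zero {X : Type*} (g : GMetricSpace X) (x : X) : g.G x x x = 0 :=
  (g.eq_zero_iff x x x).mpr ⟨rfl, rfl⟩

lemma d_eq {X : Type*} (g : GMetricSpace X) {x y : X} (h : g.G x y y = 0) : x = y :=
  ((g.eq_zero_iff x y y).mp h).1

lemma d_pos {X : Type*} (g : GMetricSpace X) {x y : X} (h : x ≠ y) : 0 < g.G x y y :=
  lt_of_le_of_ne (g.nonneg x y y) (fun e => h (d_eq g e.symm))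

lemma noFix_aux (h : ℝ → ℝ → ℝ → ℝ)
    (husc : ∀ p q r : ℝ, 0 ≤ p → 0 ≤ q → 0 ≤ r →
      ∀ u v w : ℕ → ℝ, (∀ n, 0 ≤ u n) → (∀ n, 0 ≤ v n) → (∀ n, 0 ≤ w n) →
      Tendsto u atTop (𝓝 p) → Tendsto v atTop (𝓝 q) → Tendsto w atTop (𝓝 r) →
      Filter.limsup (fun n => h (u n) (v n) (w n)) atTop ≤ h p q r)
    (hmono : ∀ p q r p' q' r' : ℝ, 0 ≤ p → 0 ≤ q → 0 ≤ r →
      p ≤ p' → q ≤ q' → r ≤ r' → h p q r ≤ h p' q' r')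
    (hlt : ∀ t > (0:ℝ), h t t t < t)
    (u v w sq : ℕ → ℝ) (hu0 : ∀ n, 0 ≤ u n) (hv0 : ∀ n, 0 ≤ v n) (hw0 : ∀ n, 0 ≤ w n)
    (p q r t : ℝ) (hp : Tendsto u atTop (𝓝 p)) (hq : Tendsto v atTop (𝓝 q))
    (hr : Tendsto w atTop (𝓝 r)) (hs : Tendsto sq atTop (𝓝 t))
    (ht : 0 < t) (hpt : p ≤ t) (hqt : q ≤ t) (hrt : r ≤ t)
    (hsh : ∀ᶠ n in atTop, sq n ≤ h (u n) (v n) (w n)) : False := by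
  have hp0 : 0 ≤ p := le_of_tendsto_of_tendsto' tendsto_const_nhds hp hu0
  have hq0 : 0 ≤ q := le_of_tendsto_of_tendsto' tendsto_const_nhds hq hv0
  have hr0 : 0 ≤ r := le_of_tendsto_of_tendsto' tendsto_const_nhds hr hw0
  have hH : limsup (fun n => h (u n) (v n) (w n)) atTop ≤ h p q r :=
    husc p q r hp0 hq0 hr0 u v w hu0 hv0 hw0 hp hq hr
  have hhl : h p q r < t :=
    lt_of_le_of_lt (hmono p q r t t t hp0 hq0 hr0 hpt hqt hrt) (hlt t ht)
  set c : ℝ := (h p q r + t) / 2 with hc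
  have hc1 : h p q r < c := by rw [hc]; linarith
  have hc2 : c < t := by rw [hc]; linarith
  -- boundedness of the h-sequence
  set M : ℝ := max (p + 1) (max (q + 1) (r + 1)) with hM
  have hub : ∀ᶠ n in atTop, u n ≤ M := by
    filter_upwards [hp.eventually_lt_const (lt_add_one p)] with n hn
    exact le_trans hn.le (le_max_left _ _)
  have hvb : ∀ᶠ n in atTop, v n ≤ M := by
    filter_upwards [hq.eventually_lt_const (lt_add_one q)] with n hn
    exact le_trans hn.le (le_trans (le_max_left _ _) (le_max_right _ _))
  have hwb : ∀ᶠ n in atTop, w n ≤ M := by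
    filter_upwards [hr.eventually_lt_const (lt_add_one r)] with n hn
    exact le_trans hn.le (le_trans (le_max_right _ _) (le_max_right _ _))
  have hbdd : IsBoundedUnder (· ≤ ·) atTop (fun n => h (u n) (v n) (w n)) := by
    refine ⟨h M M M, ?_⟩
    rw [eventually_map]
    filter_upwards [hub, hvb, hwb] with n h1 h2 h3
    exact hmono _ _ _ _ _ _ (hu0 n) (hv0 n) (hw0 n) h1 h2 h3
  have hev : ∀ᶠ n in atTop, h (u n) (v n) (w n) < c :=
    eventually_lt_of_limsup_lt (lt_of_le_of_lt hH hc1) hbdd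
  have : t ≤ c := by
    refine le_of_tendsto hs ?_
    filter_upwards [hsh, hev] with n h1 h2
    exact le_trans h1 h2.le
  linarith

theorem stmt_11 {X : Type*} (g : GMetricSpace X) (hsym : GSymmetric g)
    (h : ℝ → ℝ → ℝ → ℝ)
    (hnonneg : ∀ p q r, 0 ≤ p → 0 ≤ q → 0 ≤ r → 0 ≤ h p q r)
    (husc : ∀ p q r : ℝ, 0 ≤ p → 0 ≤ q → 0 ≤ r →
      ∀ u v w : ℕ → ℝ, (∀ n, 0 ≤ u n) → (∀ n, 0 ≤ v n) → (∀ n, 0 ≤ w n) →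
      Tendsto u atTop (𝓝 p) → Tendsto v atTop (𝓝 q) → Tendsto w atTop (𝓝 r) →
      Filter.limsup (fun n => h (u n) (v n) (w n)) atTop ≤ h p q r)
    (hmono : ∀ p q r p' q' r' : ℝ, 0 ≤ p → 0 ≤ q → 0 ≤ r →
      p ≤ p' → q ≤ q' → r ≤ r' → h p q r ≤ h p' q' r')
    (hlt : ∀ t > (0:ℝ), h t t t < t)
    (T : X → X) (hinj : Function.Injective T)
    (horb : OrbContinuous g T) (hcomp : TOrbComplete g T)
    (a : X → X → X → ℝ) (ha : ∀ x y z, 0 ≤ a x y z) (ha0 : ∀ x y, a x y y = 0)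
    (hcontr : ∀ x y z, x ≠ y →
      g.G (T x) (T y) (T z) ≤
        h (g.G x y z)
          ((g.G x y z * g.G (T x) (T y) (T z))⁻¹ *
            (g.G x (T x) (T x) * g.G y (T y) (T y) * g.G z (T z) (T z)))
          (a x y z * g.G (T x) y z * g.G x (T y) z * g.G x y (T z))) :
    ∀ x : X, ∃ u : X, GConv g (fun n => T^[n] x) u ∧ T u = u := by
  classical
  intro x
  set s : ℕ → X := fun n => T^[n] x with hs
  have hsucc : ∀ n, s (n + 1) = T (s n) := fun n => Function.iterate_succ_apply' T n x
  -- fixed point from convergence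
  have key : ∀ u : X, GConv g s u → T u = u := by
    intro u hu
    have h1 : GConv g (fun i => T (T^[i] x)) (T u) := horb x u id strictMono_id hu
    have h2 : Tendsto (fun i => g.G u (s (i + 1)) (s (i + 1))) atTop (𝓝 0) :=
      hu.comp (tendsto_add_atTop_nat 1)
    have h1' : Tendsto (fun i => g.G (T u) (s (i + 1)) (s (i + 1))) atTop (𝓝 0) := by
      have : ∀ i, s (i + 1) = T (T^[i] x) := fun i => hsucc i
      simpa [this, GConv] using h1
    have hle : g.G (T u) u u ≤ 0 := by
      have hsum : Tendsto
          (fun i => g.G (T u) (s (i + 1)) (s (i + 1)) + g.G u (s (i + 1)) (s (i + 1)))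
          atTop (𝓝 0) := by simpa using h1'.add h2
      refine ge_of_tendsto hsum (Eventually.of_forall fun i => ?_)
      calc g.G (T u) u u ≤ g.G (T u) (s (i+1)) (s (i+1)) + g.G (s (i+1)) u u :=
            d_tri g _ _ _
        _ = g.G (T u) (s (i+1)) (s (i+1)) + g.G u (s (i+1)) (s (i+1)) := by
            rw [d_symm g hsym (s (i+1)) u]
    exact d_eq g (le_antisymm hle (g.nonneg _ _ _))
  by_cases hA : ∃ n, T (s n) = s n
  · obtain ⟨n, hn⟩ := hA
    refine ⟨s n, ?_, hn⟩
    have hconst : ∀ m, n ≤ m → s m = s n := by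
      intro m hm
      induction m with
      | zero => rw [Nat.le_zero.mp hm]
      | succ k ih =>
        rcases Nat.lt_or_ge n (k+1) with hlt | hge
        · have hk : n ≤ k := by omega
          rw [hsucc k, ih hk, hn]
        · have : n = k + 1 := by omega
          rw [this]
    show Tendsto (fun m => g.G (s n) (s m) (s m)) atTop (𝓝 0)
    refine tendsto_const_nhds.congr' ?_
    filter_upwards [eventually_ge_atTop n] with m hm
    rw [hconst m hm, d_zero]
  · push_neg at hA
    have hne : ∀ n, s n ≠ s (n + 1) := by
      intro n e
      exact hA n (by rw [← hsucc n]; exact e.symm)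
    set D : ℕ → ℝ := fun n => g.G (s n) (s (n+1)) (s (n+1)) with hD
    have hDpos : ∀ n, 0 < D n := fun n => d_pos g (hne n)
    have hstep : ∀ n, D (n+1) ≤ h (D n) (D (n+1)) 0 := by
      intro n
      have hc := hcontr (s n) (s (n+1)) (s (n+1)) (hne n)
      rw [← hsucc n, ← hsucc (n+1), ha0] at hc
      rw [zero_mul, zero_mul, zero_mul] at hc
      have e2 : (D n * D (n+1))⁻¹ * (D n * D (n+1) * D (n+1)) = D (n+1) := by
        have h1 : D n ≠ 0 := (hDpos n).ne'
        have h2 : D (n+1) ≠ 0 := (hDpos (n+1)).ne'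
        field_simp
      calc D (n+1) ≤ h (D n) ((D n * D (n+1))⁻¹ * (D n * D (n+1) * D (n+1))) 0 := hc
        _ = h (D n) (D (n+1)) 0 := by rw [e2]
    have hanti : ∀ n, D (n+1) ≤ D n := by
      intro n
      by_contra hcon
      push_neg at hcon
      have := lt_of_le_of_lt (hstep n)
        (lt_of_le_of_lt
          (hmono (D n) (D (n+1)) 0 (D (n+1)) (D (n+1)) (D (n+1))
            (hDpos n).le (hDpos (n+1)).le le_rfl hcon.le le_rfl (hDpos (n+1)).le)
          (hlt (D (n+1)) (hDpos (n+1))))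
      exact lt_irrefl _ this
    have hD0 : Tendsto D atTop (𝓝 0) := by
      have hant : Antitone D := antitone_nat_of_succ_le hanti
      have hbdd : BddBelow (Set.range D) := ⟨0, by rintro y ⟨n, rfl⟩; exact (hDpos n).le⟩
      have hL : Tendsto D atTop (𝓝 (⨅ n, D n)) := tendsto_atTop_ciInf hant hbdd
      have hL0 : 0 ≤ ⨅ n, D n := le_ciInf fun n => (hDpos n).le
      rcases eq_or_lt_of_le hL0 with he | hlt'
      · rwa [← he] at hL
      · exfalso
        exact noFix_aux h husc hmono hlt D (fun n => D (n+1)) (fun _ => 0) (fun n => D (n+1))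
          (fun n => (hDpos n).le) (fun n => (hDpos (n+1)).le) (fun _ => le_rfl)
          (⨅ n, D n) (⨅ n, D n) 0 (⨅ n, D n) hL (hL.comp (tendsto_add_atTop_nat 1))
          tendsto_const_nhds (hL.comp (tendsto_add_atTop_nat 1))
          hlt' le_rfl le_rfl hL0
          (Eventually.of_forall hstep)
    have hcauchy : GCauchy g s := by
      by_contra hC
      unfold GCauchy at hC
      push_neg at hC
      obtain ⟨ε, hε, hW⟩ := hC
      have exist : ∀ k : ℕ, ∃ n, k ≤ n ∧ ∃ m, n < m ∧ ε ≤ g.G (s n) (s m) (s m) := by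
        intro k
        obtain ⟨m, hm, n, hn, hge⟩ := hW k
        rcases lt_trichotomy n m with hlt' | heq | hgt
        · exact ⟨n, hn, m, hlt', hge⟩
        · exfalso; rw [heq, d_zero] at hge; linarith
        · exact ⟨m, hm, n, hgt, by rwa [d_symm g hsym]⟩
      choose nf h1 mf h2 h3 using exist
      have hex : ∀ k, ∃ j, nf k < j ∧ ε ≤ g.G (s (nf k)) (s j) (s j) :=
        fun k => ⟨mf k, h2 k, h3 k⟩
      set mk : ℕ → ℕ := fun k => Nat.find (hex k) with hmkdef
      have hspec : ∀ k, nf k < mk k ∧ ε ≤ g.G (s (nf k)) (s (mk k)) (s (mk k)) :=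
        fun k => Nat.find_spec (hex k)
      have hmin : ∀ k j, j < mk k → nf k < j → g.G (s (nf k)) (s j) (s j) < ε := by
        intro k j hj hj2
        by_contra hcon
        push_neg at hcon
        exact Nat.find_min (hex k) hj ⟨hj2, hcon⟩
      have hlow : ∀ k, g.G (s (nf k)) (s (mk k - 1)) (s (mk k - 1)) < ε := by
        intro k
        have h12 := (hspec k).1
        rcases eq_or_lt_of_le (show nf k ≤ mk k - 1 by omega) with heq | hlt'
        · rw [← heq, d_zero]; exact hε
        · exact hmin k (mk k - 1) (by omega) hlt'
      -- index tendstos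
      have tnf : Tendsto nf atTop atTop := tendsto_atTop_mono h1 tendsto_id
      have tmk : Tendsto mk atTop atTop :=
        tendsto_atTop_mono (fun k => le_trans (h1 k) (hspec k).1.le) tendsto_id
      have tm1 : Tendsto (fun k => mk k - 1) atTop atTop :=
        tendsto_atTop_mono (fun k =>
          (show k ≤ mk k - 1 by have := (hspec k).1; have := h1 k; omega)) tendsto_id
      -- R tends to ε
      have hRlb : ∀ k, ε ≤ g.G (s (nf k)) (s (mk k)) (s (mk k)) := fun k => (hspec k).2
      have hRub : ∀ k, g.G (s (nf k)) (s (mk k)) (s (mk k)) ≤ ε + D (mk k - 1) := by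
        intro k
        have hm1 : mk k - 1 + 1 = mk k := by have := (hspec k).1; omega
        have hDk : D (mk k - 1) = g.G (s (mk k - 1)) (s (mk k)) (s (mk k)) := by
          show g.G (s (mk k - 1)) (s (mk k - 1 + 1)) (s (mk k - 1 + 1)) = _
          rw [hm1]
        have t1 := d_tri g (s (nf k)) (s (mk k - 1)) (s (mk k))
        have := hlow k
        rw [hDk]
        linarith
      have hRt : Tendsto (fun k => g.G (s (nf k)) (s (mk k)) (s (mk k))) atTop (𝓝 ε) := by
        refine tendsto_of_tendsto_of_tendsto_of_le_of_le' (g := fun _ => ε)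
          tendsto_const_nhds ?_ (Eventually.of_forall hRlb) (Eventually.of_forall hRub)
        simpa using tendsto_const_nhds.add (hD0.comp tm1)
      -- Q tends to ε
      have hQub : ∀ k, g.G (s (nf k + 1)) (s (mk k + 1)) (s (mk k + 1)) ≤
          D (nf k) + g.G (s (nf k)) (s (mk k)) (s (mk k)) + D (mk k) := by
        intro k
        have t1 := d_tri g (s (nf k + 1)) (s (nf k)) (s (mk k + 1))
        have t2 := d_tri g (s (nf k)) (s (mk k)) (s (mk k + 1))
        have e1 := d_symm g hsym (s (nf k)) (s (nf k + 1))
        show g.G (s (nf k + 1)) (s (mk k + 1)) (s (mk k + 1)) ≤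
          g.G (s (nf k)) (s (nf k + 1)) (s (nf k + 1)) + g.G (s (nf k)) (s (mk k)) (s (mk k))
            + g.G (s (mk k)) (s (mk k + 1)) (s (mk k + 1))
        linarith
      have hQlb : ∀ k, g.G (s (nf k)) (s (mk k)) (s (mk k)) - D (nf k) - D (mk k) ≤
          g.G (s (nf k + 1)) (s (mk k + 1)) (s (mk k + 1)) := by
        intro k
        have t1 := d_tri g (s (nf k)) (s (nf k + 1)) (s (mk k))
        have t2 := d_tri g (s (nf k + 1)) (s (mk k + 1)) (s (mk k))
        have e1 := d_symm g hsym (s (mk k)) (s (mk k + 1))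
        show g.G (s (nf k)) (s (mk k)) (s (mk k)) - g.G (s (nf k)) (s (nf k + 1)) (s (nf k + 1))
            - g.G (s (mk k)) (s (mk k + 1)) (s (mk k + 1)) ≤ _
        linarith
      have hQt : Tendsto (fun k => g.G (s (nf k + 1)) (s (mk k + 1)) (s (mk k + 1)))
          atTop (𝓝 ε) := by
        refine tendsto_of_tendsto_of_tendsto_of_le_of_le'
          (g := fun k => g.G (s (nf k)) (s (mk k)) (s (mk k)) - D (nf k) - D (mk k))
          (h := fun k => D (nf k) + g.G (s (nf k)) (s (mk k)) (s (mk k)) + D (mk k))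
          ?_ ?_ (Eventually.of_forall hQlb) (Eventually.of_forall hQub)
        · simpa using (hRt.sub (hD0.comp tnf)).sub (hD0.comp tmk)
        · simpa using ((hD0.comp tnf).add hRt).add (hD0.comp tmk)
      -- positivity
      have hnes : ∀ k, s (nf k) ≠ s (mk k) := by
        intro k e
        have := hRlb k
        rw [← e, d_zero] at this
        linarith
      have hQpos : ∀ k, 0 < g.G (s (nf k + 1)) (s (mk k + 1)) (s (mk k + 1)) := by
        intro k
        refine d_pos g ?_
        rw [hsucc, hsucc]
        exact fun e => hnes k (hinj e)
      have hRpos : ∀ k, 0 < g.G (s (nf k)) (s (mk k)) (s (mk k)) :=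
        fun k => lt_of_lt_of_le hε (hRlb k)
      -- the contraction inequality
      have hcon : ∀ k, g.G (s (nf k + 1)) (s (mk k + 1)) (s (mk k + 1)) ≤
          h (g.G (s (nf k)) (s (mk k)) (s (mk k)))
            ((g.G (s (nf k)) (s (mk k)) (s (mk k)) *
              g.G (s (nf k + 1)) (s (mk k + 1)) (s (mk k + 1)))⁻¹ *
              (D (nf k) * D (mk k) * D (mk k))) 0 := by
        intro k
        have hc := hcontr (s (nf k)) (s (mk k)) (s (mk k)) (hnes k)
        rw [← hsucc (nf k), ← hsucc (mk k), ha0, zero_mul, zero_mul, zero_mul] at hc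
        exact hc
      -- the V sequence
      set V : ℕ → ℝ := fun k =>
        (g.G (s (nf k)) (s (mk k)) (s (mk k)) *
          g.G (s (nf k + 1)) (s (mk k + 1)) (s (mk k + 1)))⁻¹ *
          (D (nf k) * D (mk k) * D (mk k)) with hVdef
      have hV0 : ∀ k, 0 ≤ V k := by
        intro k
        refine mul_nonneg (inv_nonneg.2 (mul_nonneg (g.nonneg _ _ _) (g.nonneg _ _ _)))
          (mul_nonneg (mul_nonneg (hDpos _).le (hDpos _).le) (hDpos _).le)
      have hVt : Tendsto V atTop (𝓝 0) := by
        have hbt : Tendsto (fun k => (ε * (ε / 2))⁻¹ * (D (nf k) * D (mk k) * D (mk k)))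
            atTop (𝓝 0) := by
          have : Tendsto (fun _ : ℕ => (ε * (ε / 2))⁻¹) atTop (𝓝 ((ε * (ε / 2))⁻¹)) :=
            tendsto_const_nhds
          simpa using this.mul (((hD0.comp tnf).mul (hD0.comp tmk)).mul (hD0.comp tmk))
        refine squeeze_zero' (Eventually.of_forall hV0) ?_ hbt
        filter_upwards [hQt.eventually (eventually_gt_nhds (half_lt_self hε))] with k hk
        have hpos2 : (0:ℝ) < ε * (ε / 2) := by positivity
        have hle : ε * (ε / 2) ≤ g.G (s (nf k)) (s (mk k)) (s (mk k)) *
            g.G (s (nf k + 1)) (s (mk k + 1)) (s (mk k + 1)) :=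
          mul_le_mul (hRlb k) hk.le (by positivity) (hRpos k).le
        have hinv : (g.G (s (nf k)) (s (mk k)) (s (mk k)) *
            g.G (s (nf k + 1)) (s (mk k + 1)) (s (mk k + 1)))⁻¹ ≤ (ε * (ε / 2))⁻¹ :=
          inv_anti₀ hpos2 hle
        exact mul_le_mul_of_nonneg_right hinv
          (mul_nonneg (mul_nonneg (hDpos _).le (hDpos _).le) (hDpos _).le)
      exact noFix_aux h husc hmono hlt
        (fun k => g.G (s (nf k)) (s (mk k)) (s (mk k))) V (fun _ => 0)
        (fun k => g.G (s (nf k + 1)) (s (mk k + 1)) (s (mk k + 1)))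
        (fun k => (hRpos k).le) hV0 (fun _ => le_rfl)
        ε 0 0 ε hRt hVt tendsto_const_nhds hQt hε le_rfl hε.le hε.le
        (Eventually.of_forall hcon)
    obtain ⟨u, hu⟩ := hcomp x s (fun i => ⟨i, rfl⟩) hcauchy
    exact ⟨u, hu, key u hu⟩
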